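/- For all τ, π, σ ∈ S_n and all z ∈ {1,...,n}: 1 ≤ |Rec_{τ,z}(π) ∩ Rec_{τ,z}(σ)| ≤ LCS(π,σ). -/

import Mathlib

open scoped Classical
open Finset

noncomputable section

def oneLine {n : ℕ} (π : Equiv.Perm (Fin n)) : List (Fin n) :=
  (List.finRange n).map π

def lcs {n : ℕ} (π σ : Equiv.Perm (Fin n)) : ℕ :=
  sSup {k | ∃ l : List (Fin n), l.Sublist (oneLine π) ∧ l.Sublist (oneLine σ) ∧ l.length = k}

/-- `RecSet τ z π` : the set of new record maxima according to `τ` obtained while scanning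
the one-line representation of `π` starting from `z`. Here `a ≤_π b` means
`π⁻¹ a ≤ π⁻¹ b`. -/
def RecSet {n : ℕ} (τ : Equiv.Perm (Fin n)) (z : Fin n) (π : Equiv.Perm (Fin n)) :
    Finset (Fin n) :=
  Finset.univ.filter (fun a =>
    π⁻¹ z ≤ π⁻¹ a ∧ ∀ b : Fin n, π⁻¹ z ≤ π⁻¹ b → π⁻¹ b < π⁻¹ a → τ⁻¹ b < τ⁻¹ a)

lemma mem_recSet_iff {n : ℕ} (τ : Equiv.Perm (Fin n)) (z : Fin n) (π : Equiv.Perm (Fin n))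
    (a : Fin n) : a ∈ RecSet τ z π ↔
    π⁻¹ z ≤ π⁻¹ a ∧ ∀ b : Fin n, π⁻¹ z ≤ π⁻¹ b → π⁻¹ b < π⁻¹ a → τ⁻¹ b < τ⁻¹ a := by
  simp [RecSet]

lemma recSet_lt {n : ℕ} (τ : Equiv.Perm (Fin n)) (z : Fin n) (π : Equiv.Perm (Fin n))
    {a b : Fin n} (ha : a ∈ RecSet τ z π) (hb : b ∈ RecSet τ z π)
    (h : π⁻¹ a < π⁻¹ b) : τ⁻¹ a < τ⁻¹ b := by
  rw [mem_recSet_iff] at ha hb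
  exact hb.2 a ha.1 h

lemma oneLine_sorted {n : ℕ} (π : Equiv.Perm (Fin n)) :
    (oneLine π).Pairwise (fun a b => π⁻¹ a < π⁻¹ b) := by
  rw [oneLine, List.pairwise_map]
  refine (List.pairwise_lt_finRange n).imp ?_
  intro i j h
  simpa using h

theorem recSet_inter_card_bounds {n : ℕ} (τ π σ : Equiv.Perm (Fin n)) (z : Fin n) :
    1 ≤ (RecSet τ z π ∩ RecSet τ z σ).card ∧
      (RecSet τ z π ∩ RecSet τ z σ).card ≤ lcs π σ := by
  set s := RecSet τ z π ∩ RecSet τ z σ with hs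
  have hz : z ∈ s := by
    simp only [hs, Finset.mem_inter, mem_recSet_iff]
    exact ⟨⟨le_rfl, fun b hb hb' => absurd hb (not_le.mpr hb')⟩,
      ⟨le_rfl, fun b hb hb' => absurd hb (not_le.mpr hb')⟩⟩
  constructor
  · exact Finset.card_pos.mpr ⟨z, hz⟩
  -- order transfer on s
  have key : ∀ a ∈ s, ∀ b ∈ s, π⁻¹ a < π⁻¹ b → σ⁻¹ a ≤ σ⁻¹ b := by
    intro a ha b hb h
    rw [hs, Finset.mem_inter] at ha hb
    have hτ : τ⁻¹ a < τ⁻¹ b := recSet_lt τ z π ha.1 hb.1 h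
    rcases lt_trichotomy (σ⁻¹ a) (σ⁻¹ b) with h' | h' | h'
    · exact h'.le
    · exact le_of_eq h'
    · exact absurd (recSet_lt τ z σ hb.2 ha.2 h') (not_lt.mpr hτ.le)
  -- the common subsequence
  set L : List (Fin n) := (oneLine π).filter (fun a => decide (a ∈ s)) with hL
  have hLmem : ∀ a : Fin n, a ∈ L ↔ a ∈ s := by
    intro a
    simp [hL, List.mem_filter, oneLine]
    intro h
    exact ⟨π⁻¹ a, by simp⟩
  have hLsubπ : L.Sublist (oneLine π) := List.filter_sublist
  have hLnodup : L.Nodup := by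
    refine hLsubπ.nodup ?_
    rw [oneLine]
    exact (List.nodup_finRange n).map π.injective
  have hLlen : L.length = s.card := by
    rw [← List.toFinset_card_of_nodup hLnodup]
    congr 1
    ext a
    simp [hLmem a]
  -- r : σ-order
  have hsortσ : List.Pairwise (fun a b => σ⁻¹ a ≤ σ⁻¹ b) (oneLine σ) := by
    refine (oneLine_sorted σ).imp ?_
    exact fun h => h.le
  have hLsorted : List.Pairwise (fun a b => σ⁻¹ a ≤ σ⁻¹ b) L := by
    refine List.Pairwise.imp_of_mem ?_ ((oneLine_sorted π).sublist hLsubπ)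
    intro a b ha hb h
    exact key a ((hLmem a).mp ha) b ((hLmem b).mp hb) h
  have hanti : IsAntisymm (Fin n) (fun a b => σ⁻¹ a ≤ σ⁻¹ b) := by
    constructor
    intro a b h1 h2
    have := le_antisymm h1 h2
    exact σ⁻¹.injective this
  have hLsubσ : L.Sublist (oneLine σ) := by
    refine @List.sublist_of_subperm_of_pairwise _ _ hanti _ _ ?_ hLsorted hsortσ
    refine hLnodup.subperm ?_
    intro a ha
    rw [oneLine]
    simp only [List.mem_map]
    exact ⟨σ⁻¹ a, by simp⟩
  -- bound on sSup
  have hbdd : BddAbove {k | ∃ l : List (Fin n), l.Sublist (oneLine π) ∧ l.Sublist (oneLine σ)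
      ∧ l.length = k} := by
    refine ⟨n, ?_⟩
    rintro k ⟨l, hl, -, rfl⟩
    have := hl.length_le
    simpa [oneLine] using this
  have hmem : s.card ∈ {k | ∃ l : List (Fin n), l.Sublist (oneLine π) ∧ l.Sublist (oneLine σ)
      ∧ l.length = k} := ⟨L, hLsubπ, hLsubσ, hLlen⟩
  exact le_csSup hbdd hmem
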